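/- Let A be a positive definite real n×n matrix with tr A = n, and let ε ∈ (0,1). If tr((A − I_n)^2) ≥ ε, then det A ≤ e^{−ε/6}. -/

import Mathlib

open MeasureTheory ENNReal Matrix Filter Topology

noncomputable section

/-- The space of `m`-transformations: tuples of linear maps `ℝ^n → ℝ^{n_j}`,
represented as matrices. -/
abbrev MTrans (m n : ℕ) (nd : Fin m → ℕ) := ∀ j : Fin m, Matrix (Fin (nd j)) (Fin n) ℝ

/-- A valid input for the Brascamp–Lieb inequality: each `f j` is measurable and
has positive finite integral. -/
def IsInput {m : ℕ} {nd : Fin m → ℕ} (f : ∀ j : Fin m, (Fin (nd j) → ℝ) → ℝ≥0∞) : Prop :=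
  ∀ j, Measurable (f j) ∧ 0 < ∫⁻ y, f j y ∧ ∫⁻ y, f j y < ⊤

/-- The Brascamp–Lieb ratio `BL(B,c;f)`. -/
def BLratio {m n : ℕ} {nd : Fin m → ℕ} (B : MTrans m n nd) (c : Fin m → ℝ)
    (f : ∀ j : Fin m, (Fin (nd j) → ℝ) → ℝ≥0∞) : ℝ≥0∞ :=
  (∫⁻ x : Fin n → ℝ, ∏ j, f j (B j *ᵥ x) ^ c j) / ∏ j, (∫⁻ y, f j y) ^ c j

/-- The Brascamp–Lieb constant `BL(B,c)`. -/
def BLconst {m n : ℕ} {nd : Fin m → ℕ} (B : MTrans m n nd) (c : Fin m → ℝ) : ℝ≥0∞ :=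
  ⨆ (f : ∀ j : Fin m, (Fin (nd j) → ℝ) → ℝ≥0∞) (_ : IsInput f), BLratio B c f

/-- Membership in `F(c)`: finite BL constant and projection-normalised. -/
def MemF {m n : ℕ} {nd : Fin m → ℕ} (B : MTrans m n nd) (c : Fin m → ℝ) : Prop :=
  BLconst B c < ⊤ ∧ ∀ j, B j * (B j)ᵀ = 1

/-- Membership in `G(c)`: the datum `(B,c)` is geometric. -/
def Geometric {m n : ℕ} {nd : Fin m → ℕ} (B : MTrans m n nd) (c : Fin m → ℝ) : Prop :=
  (∀ j, B j * (B j)ᵀ = 1) ∧ ∑ j, c j • ((B j)ᵀ * B j) = 1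

/-- Equivalence of `m`-transformations: `B̃_j = T_j⁻¹ B_j T` for invertible `T, T_j`. -/
def EquivTrans {m n : ℕ} {nd : Fin m → ℕ} (B Bt : MTrans m n nd) : Prop :=
  ∃ (T : Matrix (Fin n) (Fin n) ℝ) (Tj : ∀ j, Matrix (Fin (nd j)) (Fin (nd j)) ℝ),
    IsUnit T ∧ (∀ j, IsUnit (Tj j)) ∧ ∀ j, Bt j = (Tj j)⁻¹ * B j * T

open scoped ComplexOrder in
/-- The square root of a positive semidefinite matrix, as defined in Mathlib (Dec 2024). -/
def Matrix.PosSemidef.sqrt {n : Type*} [Fintype n] [DecidableEq n] {𝕜 : Type*} [RCLike 𝕜]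
    {A : Matrix n n 𝕜} (hA : A.PosSemidef) : Matrix n n 𝕜 :=
  (hA.1.eigenvectorUnitary : Matrix n n 𝕜) * diagonal ((↑) ∘ (√·) ∘ hA.1.eigenvalues) *
    (star hA.1.eigenvectorUnitary : Matrix n n 𝕜)

open Classical in
/-- The map `φ`: `φ(B)_j = (B_j B_j^*)^{-1/2} B_j` (defined where `B_j B_j^*` is
positive definite, and as `B_j` otherwise). -/
def phiMap {m n : ℕ} {nd : Fin m → ℕ} (B : MTrans m n nd) : MTrans m n nd := fun j =>
  if h : (B j * (B j)ᵀ).PosDef then (h.posSemidef.sqrt)⁻¹ * B j else B j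

open Classical in
/-- The map `ψ`: `ψ(B)_j = B_j M^{-1/2}` with `M = ∑ c_j B_j^* B_j` (defined where `M`
is positive definite, and as `B_j` otherwise). -/
def psiMap {m n : ℕ} {nd : Fin m → ℕ} (c : Fin m → ℝ) (B : MTrans m n nd) : MTrans m n nd :=
  fun j =>
    if h : (∑ i, c i • ((B i)ᵀ * B i)).PosDef then B j * (h.posSemidef.sqrt)⁻¹ else B j

/-- The BL scaling map `Φ = φ ∘ ψ`. -/
def PhiMap {m n : ℕ} {nd : Fin m → ℕ} (c : Fin m → ℝ) (B : MTrans m n nd) : MTrans m n nd :=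
  phiMap (psiMap c B)

/-- The operator norm of a matrix, viewed as a linear map between Euclidean spaces. -/
def opNorm {a b : ℕ} (A : Matrix (Fin a) (Fin b) ℝ) : ℝ :=
  ‖LinearMap.toContinuousLinearMap (Matrix.toEuclideanLin A)‖



private lemma scalar_log_key (x : ℝ) (hx : 0 < x) :
    Real.log x ≤ (x - 1) - min ((x - 1) ^ 2) 1 / 6 := by
  have hs : Real.sqrt x ^ 2 = x := Real.sq_sqrt hx.le
  have hs0 : 0 ≤ Real.sqrt x := Real.sqrt_nonneg x
  have hlog : Real.log x ≤ 2 * (Real.sqrt x - 1) := by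
    have := Real.log_le_sub_one_of_pos (Real.sqrt_pos.mpr hx)
    calc Real.log x = 2 * Real.log (Real.sqrt x) := by
          rw [Real.log_sqrt hx.le]; ring
      _ ≤ 2 * (Real.sqrt x - 1) := by linarith
  set s := Real.sqrt x
  rcases le_or_gt x 2 with hx2 | hx2
  · have hmin : min ((x - 1) ^ 2) 1 = (x - 1) ^ 2 := by
      rw [min_eq_left]
      nlinarith
    rw [hmin]
    nlinarith [sq_nonneg (s - 1), sq_nonneg (s - 3 / 2), sq_nonneg ((s - 1) * (s + 1))]
  · have hmin : min ((x - 1) ^ 2) 1 ≤ 1 := min_le_right _ _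
    have h1 : min ((x - 1) ^ 2) 1 / 6 ≤ 1 / 6 := by linarith
    have hs2 : s ^ 2 > 2 := by rw [hs]; exact hx2
    have : 2 * (s - 1) ≤ (s ^ 2 - 1) - 1 / 6 := by
      nlinarith [sq_nonneg (s - 17 / 12), sq_nonneg (s - 1)]
    rw [hs] at this
    linarith

private lemma spectral_data {N : ℕ} (A : Matrix (Fin N) (Fin N) ℝ) (hA : A.PosDef) :
    ∃ lam : Fin N → ℝ, (∀ i, 0 < lam i) ∧ A.det = ∏ i, lam i ∧
      A.trace = ∑ i, lam i ∧
      ((A - 1) ^ 2).trace = ∑ i, (lam i - 1) ^ 2 := by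
  have hH := hA.1
  refine ⟨hH.eigenvalues, fun i => hA.eigenvalues_pos i, ?_, ?_, ?_⟩
  · have := hH.det_eq_prod_eigenvalues
    simpa using this
  all_goals {
  obtain ⟨lam, hlam⟩ : ∃ f, hH.eigenvalues = f := ⟨_, rfl⟩
  rw [hlam]
  obtain ⟨U, hU1, hU2, hspec⟩ : ∃ U : Matrix (Fin N) (Fin N) ℝ,
      U * star U = 1 ∧ star U * U = 1 ∧ A = U * diagonal lam * star U := by
    refine ⟨hH.eigenvectorUnitary, (Matrix.mem_unitaryGroup_iff).mp hH.eigenvectorUnitary.2,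
      (Matrix.mem_unitaryGroup_iff').mp hH.eigenvectorUnitary.2, ?_⟩
    have := hH.spectral_theorem
    rw [hlam] at this
    simpa using this
  have hconj : ∀ M : Matrix (Fin N) (Fin N) ℝ, (U * M * star U).trace = M.trace := by
    intro M
    rw [trace_mul_comm, ← mul_assoc, hU2, one_mul]
  first
  | · rw [hspec, hconj, trace_diagonal]
  | · have hsub : A - 1 = U * (diagonal lam - 1) * star U := by
        rw [hspec, mul_sub, sub_mul, mul_one, hU1]
      rw [hsub]
      have hkey : (U * (diagonal lam - 1) * star U) ^ 2
          = U * ((diagonal lam - 1) * (diagonal lam - 1)) * star U := by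
        rw [sq]
        simp only [mul_assoc]
        rw [← mul_assoc (star U) U, hU2, one_mul]
      rw [hkey, hconj]
      have hd : diagonal lam - 1 = diagonal (fun i => lam i - 1) := by
        rw [← diagonal_one, diagonal_sub]
      rw [hd, diagonal_mul_diagonal, trace_diagonal]
      congr 1; ext i; ring }

theorem det_le_exp_of_trace_sq_ge {N : ℕ} (A : Matrix (Fin N) (Fin N) ℝ)
    (hA : A.PosDef) (htr : A.trace = (N : ℝ)) (ε : ℝ) (hε0 : 0 < ε) (hε1 : ε < 1)
    (h : ε ≤ ((A - 1) ^ 2).trace) :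
    A.det ≤ Real.exp (-ε / 6) := by
  obtain ⟨lam, hpos, hdet, htrace, htrsq⟩ := spectral_data A hA
  have hdetpos : 0 < A.det := hA.det_pos
  suffices hlog : Real.log A.det ≤ -ε / 6 by
    calc A.det = Real.exp (Real.log A.det) := (Real.exp_log hdetpos).symm
      _ ≤ Real.exp (-ε / 6) := Real.exp_le_exp.mpr hlog
  have hsum1 : ∑ i, (lam i - 1) = 0 := by
    rw [Finset.sum_sub_distrib, ← htrace, htr]
    simp
  have hminsum : ε ≤ ∑ i, min ((lam i - 1) ^ 2) 1 := by
    by_cases hall : ∀ i, (lam i - 1) ^ 2 ≤ 1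
    · calc ε ≤ ((A - 1) ^ 2).trace := h
        _ = ∑ i, (lam i - 1) ^ 2 := htrsq
        _ = ∑ i, min ((lam i - 1) ^ 2) 1 :=
            Finset.sum_congr rfl fun i _ => (min_eq_left (hall i)).symm
    · push_neg at hall
      obtain ⟨i, hi⟩ := hall
      have h1 : (1 : ℝ) ≤ ∑ i, min ((lam i - 1) ^ 2) 1 := by
        have := Finset.single_le_sum (f := fun j => min ((lam j - 1) ^ 2) 1)
          (fun j _ => le_min (sq_nonneg _) zero_le_one) (Finset.mem_univ i)
        rwa [min_eq_right hi.le] at this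
      linarith
  rw [hdet, Real.log_prod fun i _ => (hpos i).ne']
  calc ∑ i, Real.log (lam i)
      ≤ ∑ i, ((lam i - 1) - min ((lam i - 1) ^ 2) 1 / 6) :=
        Finset.sum_le_sum fun i _ => scalar_log_key _ (hpos i)
    _ = ∑ i, (lam i - 1) - (∑ i, min ((lam i - 1) ^ 2) 1) / 6 := by
        rw [Finset.sum_sub_distrib, Finset.sum_div]
    _ ≤ -ε / 6 := by rw [hsum1]; linarith


end
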